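/- If G is a self-complementary simple graph on n vertices with n even, then exactly n/2 vertices of G have degree strictly less than (n-1)/2 (equivalently, degree at most (n-2)/2). -/

import Mathlib

open Finset

lemma iso_degree_aux {V : Type*} [Fintype V] [DecidableEq V] {G G' : SimpleGraph V}
    [DecidableRel G.Adj] [DecidableRel G'.Adj] (f : G ≃g G') (v : V) :
    G'.degree (f v) = G.degree v := by
  classical
  simp only [← SimpleGraph.card_neighborSet_eq_degree]
  exact Fintype.card_congr (f.mapNeighborSet v).symm

/-- if `G` is self-complementary on an even number `n` of vertices, then exactly
`n / 2` vertices have degree strictly less than `(n-1)/2`, i.e. satisfy `2 deg v < n - 1`. -/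
theorem stmt3 {V : Type*} [Fintype V] [DecidableEq V] (G : SimpleGraph V)
    [DecidableRel G.Adj] (hsc : Nonempty (G ≃g Gᶜ)) (heven : Even (Fintype.card V)) :
    (Finset.univ.filter fun v => 2 * G.degree v < Fintype.card V - 1).card
      = Fintype.card V / 2 := by
  classical
  obtain ⟨f⟩ := hsc
  set n := Fintype.card V with hn
  -- degree of f v in G
  have hdeg : ∀ v : V, G.degree (f v) = n - 1 - G.degree v := by
    intro v
    have h1 : Gᶜ.degree (f v) = G.degree v := iso_degree_aux f v
    have h2 : Gᶜ.degree (f v) = n - 1 - G.degree (f v) := SimpleGraph.degree_compl _ _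
    have hle : G.degree (f v) ≤ n - 1 := by
      have := SimpleGraph.degree_lt_card_verts (G := G) (f v)
      omega
    omega
  have hdle : ∀ v : V, G.degree v ≤ n - 1 := fun v => by
    have := SimpleGraph.degree_lt_card_verts (G := G) v
    have : 0 < n := Fintype.card_pos_iff.mpr ⟨v⟩
    omega
  set S := Finset.univ.filter fun v => 2 * G.degree v < n - 1 with hS
  set T := Finset.univ.filter fun v => n - 1 < 2 * G.degree v with hT
  have hodd : ∀ v : V, 2 * G.degree v ≠ n - 1 := by
    intro v h
    obtain ⟨k, hk⟩ := heven
    have : 0 < n := Fintype.card_pos_iff.mpr ⟨v⟩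
    omega
  have hcardST : S.card + T.card = n := by
    have hdisj : Disjoint S T := by
      simp only [hS, hT, Finset.disjoint_filter]
      intro v _ h1
      omega
    have hunion : S ∪ T = Finset.univ := by
      ext v
      simp only [hS, hT, Finset.mem_union, Finset.mem_filter, Finset.mem_univ, true_and,
        iff_true]
      have := hodd v
      omega
    rw [← Finset.card_union_of_disjoint hdisj, hunion, Finset.card_univ]
  have hbij : S.card = T.card := by
    apply Finset.card_bij (fun v _ => f v)
    · intro v hv
      simp only [hS, Finset.mem_filter, Finset.mem_univ, true_and] at hv
      simp only [hT, Finset.mem_filter, Finset.mem_univ, true_and, hdeg v]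
      have := hdle v
      omega
    · intro a _ b _ hab
      exact f.injective hab
    · intro w hw
      refine ⟨f.symm w, ?_, by simp⟩
      simp only [hT, Finset.mem_filter, Finset.mem_univ, true_and] at hw
      simp only [hS, Finset.mem_filter, Finset.mem_univ, true_and]
      have h := hdeg (f.symm w)
      rw [RelIso.apply_symm_apply] at h
      have := hdle (f.symm w)
      have := hodd (f.symm w)
      omega
  omega
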